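/- Let G be a finite simple graph, let C be an isolating cycle of G, let vw be an edge of C, and let x be a vertex of G not on C that is adjacent in G to both v and w. Then G contains an isolating cycle C' with vertex set V(C) ∪ {x}; in particular, C' is one edge longer than C and contains all vertices of C. -/

import Mathlib

/-- A closed walk `C` in `G` is an *isolating cycle* if it is a cycle and every
connected component of the graph obtained from `G` by deleting the vertices of
`C` consists of a single vertex. -/
def SimpleGraph.IsIsolatingCycle {V : Type*} (G : SimpleGraph V) {u : V}
    (C : G.Walk u u) : Prop :=
  C.IsCycle ∧
    ∀ K : (G.induce {v : V | v ∉ C.support}).ConnectedComponent,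
      ∃ x, K.supp = {x}

open SimpleGraph Walk

private lemma dart_fst_ne_end {V : Type*} {G : SimpleGraph V} {a b : V} (p : G.Walk a b)
    (hp : p.support.Nodup) {d : G.Dart} (hd : d ∈ p.darts) : d.fst ≠ b := by
  induction p with
  | nil => simp at hd
  | cons h q ih =>
    simp only [darts_cons, List.mem_cons] at hd
    simp only [support_cons, List.nodup_cons] at hp
    rcases hd with rfl | hd
    · rintro rfl; exact hp.1 q.end_mem_support
    · exact ih hp.2 hd

private lemma mem_support_iff_mem_tail {V : Type*} {G : SimpleGraph V} {a y : V}
    (c : G.Walk a a) (hc : ¬c.Nil) : y ∈ c.support ↔ y ∈ c.support.tail := by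
  cases c with
  | nil => exact absurd Walk.nil_nil hc
  | cons h q =>
    simp only [support_cons, List.tail_cons, List.mem_cons]
    constructor
    · rintro (rfl | hy)
      · exact q.end_mem_support
      · exact hy
    · exact Or.inr

private lemma noAdj_of_singletons {W : Type*} {H : SimpleGraph W}
    (h : ∀ K : H.ConnectedComponent, ∃ x, K.supp = {x}) {a b : W} : ¬H.Adj a b := by
  intro hab
  obtain ⟨z, hz⟩ := h (H.connectedComponentMk a)
  have ha : a ∈ (H.connectedComponentMk a).supp := rfl
  have hb : b ∈ (H.connectedComponentMk a).supp := by
    rw [ConnectedComponent.mem_supp_iff]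
    exact ConnectedComponent.sound hab.symm.reachable
  rw [hz, Set.mem_singleton_iff] at ha hb
  exact hab.ne (ha.trans hb.symm)

private lemma singletons_of_noAdj {W : Type*} {H : SimpleGraph W}
    (h : ∀ a b : W, ¬H.Adj a b) (K : H.ConnectedComponent) : ∃ x, K.supp = {x} := by
  induction K using ConnectedComponent.ind with
  | _ a =>
    refine ⟨a, Set.ext fun b => ?_⟩
    simp only [ConnectedComponent.mem_supp_iff, ConnectedComponent.eq, Set.mem_singleton_iff]
    constructor
    · rintro ⟨p⟩
      cases p with
      | nil => rfl
      | cons hadj _ => exact absurd hadj (h _ _)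
    · rintro rfl; exact Reachable.refl _

private lemma extend_case {V : Type*} [DecidableEq V] {G : SimpleGraph V} {u : V} (C : G.Walk u u)
    (hC : G.IsIsolatingCycle C) (v w x : V) (hadj : G.Adj v w)
    (hd : (⟨(v, w), hadj⟩ : G.Dart) ∈ C.darts)
    (hx : x ∉ C.support) (hxv : G.Adj x v) (hxw : G.Adj x w) :
    ∃ (u' : V) (C' : G.Walk u' u'),
      G.IsIsolatingCycle C' ∧
      (∀ y, y ∈ C'.support ↔ y ∈ C.support ∨ y = x) ∧
      C'.length = C.length + 1 := by
  set d : G.Dart := ⟨(v, w), hadj⟩ with hd_def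
  have hv : v ∈ C.support := dart_fst_mem_support_of_mem_darts _ hd
  have hDc : (C.rotate v hv).IsCycle := hC.1.rotate hv
  have hdD : d ∈ (C.rotate v hv).darts := (C.rotate_darts v hv).mem_iff.mpr hd
  have hDsup : ∀ y, y ∈ (C.rotate v hv).support ↔ y ∈ C.support := by
    intro y
    rw [mem_support_iff_mem_tail _ hDc.not_nil, mem_support_iff_mem_tail _ hC.1.not_nil]
    exact (C.support_rotate v hv).mem_iff
  have hDlen : (C.rotate v hv).length = C.length := by
    rw [← length_darts, ← length_darts]
    exact (C.rotate_darts v hv).perm.length_eq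
  obtain ⟨a, h₀, q₀, hq⟩ := not_nil_iff.mp hDc.not_nil
  rw [hq] at hDc hdD hDlen
  have hDsup' : ∀ y, y = v ∨ y ∈ q₀.support ↔ y ∈ C.support := by
    intro y
    rw [← hDsup y, hq, support_cons, List.mem_cons]
  -- the dart d must be the first dart of the rotated cycle
  have haw : a = w := by
    simp only [darts_cons, List.mem_cons] at hdD
    rcases hdD with heq | hdq
    · exact (congrArg (fun d : G.Dart => d.snd) heq.symm)
    · exfalso
      have hnodup : q₀.support.Nodup := by
        have := hDc.2
        simpa [support_cons] using this
      exact dart_fst_ne_end q₀ hnodup hdq rfl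
  subst haw
  -- now q₀ : G.Walk w v and h₀ : G.Adj v w
  obtain ⟨hq₀path, -⟩ := (cons_isCycle_iff q₀ h₀).mp hDc
  have hxq : x ∉ q₀.support := fun hxq => hx ((hDsup' x).mp (Or.inr hxq))
  refine ⟨v, Walk.cons hxv.symm (Walk.cons hxw q₀), ?_, ?_, ?_⟩
  · constructor
    · rw [cons_isCycle_iff]
      constructor
      · rw [cons_isPath_iff]
        exact ⟨hq₀path, hxq⟩
      · simp only [edges_cons, List.mem_cons]
        rintro (heq | hmem)
        · rw [Sym2.eq_iff] at heq
          rcases heq with ⟨rfl, rfl⟩ | ⟨rfl, -⟩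
          · exact hxw.ne rfl
          · exact hadj.ne rfl
        · exact hxq (q₀.snd_mem_support_of_mem_edges hmem)
    · apply singletons_of_noAdj
      rintro ⟨a, ha⟩ ⟨b, hb⟩ hab
      have hsub : ∀ z : V, z ∉ (Walk.cons hxv.symm (Walk.cons hxw q₀)).support →
          z ∉ C.support := by
        intro z hz hzc
        apply hz
        simp only [support_cons, List.mem_cons]
        rcases (hDsup' z).mpr hzc with rfl | hzq
        · exact Or.inl rfl
        · exact Or.inr (Or.inr hzq)
      exact noAdj_of_singletons hC.2
        (a := ⟨a, hsub a ha⟩) (b := ⟨b, hsub b hb⟩) hab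
  · intro y
    simp only [support_cons, List.mem_cons]
    constructor
    · rintro (rfl | rfl | hy)
      · exact Or.inl ((hDsup' y).mp (Or.inl rfl))
      · exact Or.inr rfl
      · exact Or.inl ((hDsup' y).mp (Or.inr hy))
    · rintro (hy | rfl)
      · rcases (hDsup' y).mpr hy with rfl | hyq
        · exact Or.inl rfl
        · exact Or.inr (Or.inr hyq)
      · exact Or.inr (Or.inl rfl)
  · simp only [length_cons] at hDlen ⊢
    omega

/-- Let `G` be a finite simple graph, `C` an isolating cycle of `G`, `vw` an
edge of `C`, and `x` a vertex of `G` not on `C` that is adjacent in `G` to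
both `v` and `w`. Then `G` contains an isolating cycle `C'` whose vertex set
is `V(C) ∪ {x}`; in particular, `C'` is one edge longer than `C` and contains
all vertices of `C`. -/
theorem isolating_extend_over_edge {V : Type*} [Fintype V] (G : SimpleGraph V)
    {u : V} (C : G.Walk u u) (hC : G.IsIsolatingCycle C)
    (v w x : V) (hvw : s(v, w) ∈ C.edges)
    (hx : x ∉ C.support) (hxv : G.Adj x v) (hxw : G.Adj x w) :
    ∃ (u' : V) (C' : G.Walk u' u'),
      G.IsIsolatingCycle C' ∧
      (∀ y, y ∈ C'.support ↔ y ∈ C.support ∨ y = x) ∧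
      C'.length = C.length + 1 := by
  classical
  rw [Walk.edges, List.mem_map] at hvw
  obtain ⟨d, hd, hde⟩ := hvw
  rcases d with ⟨⟨a, b⟩, hab⟩
  have : s(a, b) = s(v, w) := hde
  rw [Sym2.eq_iff] at this
  rcases this with ⟨rfl, rfl⟩ | ⟨rfl, rfl⟩
  · exact extend_case C hC _ _ x hab hd hx hxv hxw
  · exact extend_case C hC _ _ x hab hd hx hxw hxv
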